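/- arXiv:2106.14770 — 9 statements merged into one kernel-verified Lean document; each statement's English description precedes it below -/
import Mathlib

section
/- For all positive integers m, n, N, the sum over i from 1 to N of (-1)^(m(i-1)) / (F_{m(i-1)+n} * F_{m(i+1)+n}) equals (1/(F_n * F_{2m})) * (F_{m(N+1)}/F_{m(N+1)+n} + F_{mN}/F_{mN+n} - F_m/F_{m+n}). -/
lemma cassini (n : ℕ) : (Nat.fib (n+1) : ℤ)^2 - Nat.fib n * Nat.fib (n+2) = (-1)^n := by
  induction n with
  | zero => simp
  | succ k ih =>
    have e1 : (Nat.fib (k+2) : ℤ) = Nat.fib k + Nat.fib (k+1) := by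
      exact_mod_cast Nat.fib_add_two
    have e2 : (Nat.fib (k+3) : ℤ) = Nat.fib (k+1) + Nat.fib (k+2) := by
      exact_mod_cast Nat.fib_add_two
    rw [show k+1+1 = k+2 from rfl, show k+1+2 = k+3 from rfl, e2, e1]
    linear_combination (-1 : ℤ) * ih - (Nat.fib k : ℤ) * e1

lemma docagne (n i : ℕ) :
    (Nat.fib (n+i) : ℤ) * Nat.fib (n+1) - Nat.fib n * Nat.fib (n+i+1) = (-1)^n * Nat.fib i := by
  induction i using Nat.twoStepInduction with
  | zero => simp
  | one =>
    have := cassini n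
    ring_nf
    ring_nf at this
    linarith
  | more k ih1 ih2 =>
    have e1 : (Nat.fib (n+k+2) : ℤ) = Nat.fib (n+k) + Nat.fib (n+k+1) := by
      exact_mod_cast Nat.fib_add_two
    have e2 : (Nat.fib (n+k+2+1) : ℤ) = Nat.fib (n+k+1) + Nat.fib (n+k+2) := by
      exact_mod_cast (Nat.fib_add_two : Nat.fib (n+k+3) = _)
    have e3 : (Nat.fib (k+2) : ℤ) = Nat.fib k + Nat.fib (k+1) := by
      exact_mod_cast Nat.fib_add_two
    have h1 : n + (k+2) = n + k + 2 := by ring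
    rw [show n + (k+1) = n + k + 1 from by ring, show n + k + 1 + 1 = n + k + 2 from rfl] at ih2
    rw [h1, e2, e1, e3]
    linear_combination ih1 + ih2 + (Nat.fib n : ℤ) * e1

lemma vajda (n i j : ℕ) :
    (Nat.fib (n+i) : ℤ) * Nat.fib (n+j) - Nat.fib n * Nat.fib (n+i+j) = (-1)^n * Nat.fib i * Nat.fib j := by
  induction j using Nat.twoStepInduction with
  | zero => simp [mul_comm]
  | one =>
    have := docagne n i
    simpa using this
  | more k ih1 ih2 =>
    have e1 : (Nat.fib (n+k+2) : ℤ) = Nat.fib (n+k) + Nat.fib (n+k+1) := by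
      exact_mod_cast Nat.fib_add_two
    have e2 : (Nat.fib (n+i+k+2) : ℤ) = Nat.fib (n+i+k) + Nat.fib (n+i+k+1) := by
      exact_mod_cast Nat.fib_add_two
    have e3 : (Nat.fib (k+2) : ℤ) = Nat.fib k + Nat.fib (k+1) := by
      exact_mod_cast Nat.fib_add_two
    rw [show n + (k+1) = n + k + 1 from by ring, show n + i + (k+1) = n + i + k + 1 from by ring] at ih2
    rw [show n + i + k = n + i + k from rfl] at ih1
    rw [show n + (k+2) = n + k + 2 from by ring, show n + i + (k+2) = n + i + k + 2 from by ring,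
      e1, e2, e3]
    rw [show n + i + k = n + i + k from rfl]
    linear_combination ih1 + ih2

lemma fibq_pos (k : ℕ) (hk : 0 < k) : (0:ℚ) < (Nat.fib k : ℚ) := by
  exact_mod_cast Nat.fib_pos.mpr hk

theorem stmt_0 (m n N : ℕ) (hm : 0 < m) (hn : 0 < n) (hN : 0 < N) :
    ∑ i ∈ Finset.Icc 1 N,
      ((-1 : ℚ) ^ (m * (i - 1)) /
        ((Nat.fib (m * (i - 1) + n) : ℚ) * (Nat.fib (m * (i + 1) + n) : ℚ)))
    = (1 / ((Nat.fib n : ℚ) * (Nat.fib (2 * m) : ℚ))) *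
        ((Nat.fib (m * (N + 1)) : ℚ) / (Nat.fib (m * (N + 1) + n) : ℚ)
          + (Nat.fib (m * N) : ℚ) / (Nat.fib (m * N + n) : ℚ)
          - (Nat.fib m : ℚ) / (Nat.fib (m + n) : ℚ)) := by
  have hfn := fibq_pos n hn
  have hf2m := fibq_pos (2*m) (by omega)
  induction N, hN using Nat.le_induction with
  | base =>
    have h1 := fibq_pos (m*0+n) (by omega)
    have h2 := fibq_pos (m*2+n) (by omega)
    have h3 := fibq_pos (m*(1+1)+n) (by omega)
    have h4 := fibq_pos (m*1+n) (by omega)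
    have h5 := fibq_pos (m+n) (by omega)
    simp only [Finset.Icc_self, Finset.sum_singleton]
    norm_num
    have h6 := fibq_pos (2*m+n) (by omega)
    field_simp
    rw [show m*2 = 2*m from by ring]
  | succ N hN1 ih =>
    rw [Finset.sum_Icc_succ_top (by omega : 1 ≤ N + 1), ih]
    have key := vajda (m*N) (2*m) n
    have e1 : m*N + 2*m = m*(N+2) := by ring
    rw [e1] at key
    have h1 := fibq_pos (m*N+n) (by omega)
    have h2 := fibq_pos (m*(N+2)+n) (by omega)
    have h3 := fibq_pos (m*(N+1)+n) (by omega)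
    have h4 := fibq_pos (m+n) (by omega)
    have keyq : (Nat.fib (m*(N+2)) : ℚ) * Nat.fib (m*N+n)
        - Nat.fib (m*N) * Nat.fib (m*(N+2)+n)
        = (-1)^(m*N) * Nat.fib (2*m) * Nat.fib n := by
      exact_mod_cast congrArg (fun x : ℤ => (x : ℚ)) key
    have step : ((-1:ℚ))^(m*N) / ((Nat.fib (m*N+n) : ℚ) * (Nat.fib (m*(N+2)+n) : ℚ))
        = 1/((Nat.fib n : ℚ) * (Nat.fib (2*m) : ℚ)) *
          ((Nat.fib (m*(N+2)) : ℚ)/(Nat.fib (m*(N+2)+n) : ℚ)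
            - (Nat.fib (m*N) : ℚ)/(Nat.fib (m*N+n) : ℚ)) := by
      field_simp
      linear_combination (-1 : ℚ) * keyq
    simp only [Nat.add_sub_cancel]
    rw [show N + 1 + 1 = N + 2 from rfl, step]
    ring
end

section
/- For all positive integers m, n, N, the sum over i from 1 to N of (-1)^(m(i-1)) / (L_{m(i-1)+n} * L_{m(i+1)+n}) equals (1/(5 * F_n * F_{2m})) * (2/L_n + L_m/L_{m+n} - L_{mN}/L_{mN+n} - L_{m(N+1)}/L_{m(N+1)+n}). -/
def lucas : ℕ → ℕ
  | 0 => 2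
  | 1 => 1
  | n + 2 => lucas (n + 1) + lucas n

lemma lucas_rec (k : ℕ) : (lucas (k+2) : ℚ) = lucas (k+1) + lucas k := by
  norm_cast

lemma fib_rec (k : ℕ) : (Nat.fib (k+2) : ℚ) = Nat.fib (k+1) + Nat.fib k := by
  rw [Nat.fib_add_two]; push_cast; ring

lemma lucas_pos (k : ℕ) : 0 < lucas k := by
  induction k using Nat.twoStepInduction with
  | zero => decide
  | one => decide
  | more k ih1 ih2 => show 0 < lucas (k+1) + lucas k; omega

-- 2 L_{n+1} = L_n + 5 F_n
lemma l1 (n : ℕ) : 2 * (lucas (n+1) : ℚ) = lucas n + 5 * Nat.fib n := by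
  induction n using Nat.twoStepInduction with
  | zero => simp [lucas]
  | one => norm_num [lucas, Nat.fib]
  | more n ih1 ih2 =>
    have h1 := lucas_rec (n+1)
    have h2 := lucas_rec n
    have h3 := fib_rec n
    push_cast at *
    linarith

-- 2 L_{d+n} = L_d L_n + 5 F_d F_n
lemma l2 (d n : ℕ) : 2 * (lucas (d+n) : ℚ)
    = lucas d * lucas n + 5 * Nat.fib d * Nat.fib n := by
  induction d using Nat.twoStepInduction with
  | zero => simp [lucas]
  | one => have := l1 n; simp only [lucas, Nat.fib_one]
           push_cast
           rw [show 1 + n = n + 1 from by ring]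
           push_cast at this ⊢; linarith
  | more d ih1 ih2 =>
    have h1 : (lucas (d+2+n) : ℚ) = lucas (d+1+n) + lucas (d+n) := by
      rw [show d+2+n = (d+n)+2 from by ring, lucas_rec, show d+n+1 = d+1+n from by ring]
    have h2 := lucas_rec d
    have h3 := fib_rec d
    nlinarith [ih1, ih2]

-- L_a L_c + L_{a+1} L_{c+1} = L_{a+c} + L_{a+c+2}
lemma l3 (a c : ℕ) : (lucas a : ℚ) * lucas c + lucas (a+1) * lucas (c+1)
    = lucas (a+c) + lucas (a+c+2) := by
  induction a using Nat.twoStepInduction with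
  | zero => have := lucas_rec c; simp [lucas] at *; push_cast; linarith
  | one =>
    have h1 := lucas_rec c
    have h2 : (lucas (1+c+2) : ℚ) = lucas (c+2) + lucas (c+1) := by
      rw [show 1+c+2 = (c+1)+2 from by ring, lucas_rec, show c+1+1 = c+2 from by ring]
    have h3 : (lucas (1+c) : ℚ) = lucas (c+1) := by rw [show 1+c = c+1 from by ring]
    simp only [lucas] at *
    push_cast at *
    nlinarith
  | more a ih1 ih2 =>
    have h1 := lucas_rec a
    have h2 := lucas_rec (a+1)
    have h3 : (lucas (a+2+c) : ℚ) = lucas (a+1+c) + lucas (a+c) := by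
      rw [show a+2+c = (a+c)+2 from by ring, lucas_rec, show a+c+1 = a+1+c from by ring]
    have h4 : (lucas (a+2+c+2) : ℚ) = lucas (a+1+c+2) + lucas (a+c+2) := by
      rw [show a+2+c+2 = (a+c+2)+2 from by ring, lucas_rec,
        show a+c+2+1 = a+1+c+2 from by ring]
    nlinarith [ih1, ih2]

-- key: L_b L_{b+d+n} - L_{b+d} L_{b+n} = (-1)^b 5 F_d F_n
lemma key (b d n : ℕ) : (lucas b : ℚ) * lucas (b+d+n) - lucas (b+d) * lucas (b+n)
    = (-1 : ℚ)^b * 5 * Nat.fib d * Nat.fib n := by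
  induction b with
  | zero =>
    have h1 := l2 (d+n) 0
    have h2 := l2 d n
    simp only [lucas, Nat.zero_add, pow_zero] at *
    push_cast at *
    nlinarith [l2 d n]
  | succ b ih =>
    have h3 := l3 b (b+d+n)
    have h4 := l3 (b+d) (b+n)
    have e1 : b + (b+d+n) = (b+d) + (b+n) := by ring
    rw [e1] at h3
    have e2 : (lucas (b+1+d) : ℚ) = lucas (b+d+1) := by rw [show b+1+d = b+d+1 from by ring]
    have e3 : (lucas (b+1+n) : ℚ) = lucas (b+n+1) := by rw [show b+1+n = b+n+1 from by ring]
    have e4 : (lucas (b+1+d+n) : ℚ) = lucas (b+d+n+1) := by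
      rw [show b+1+d+n = b+d+n+1 from by ring]
    rw [e2, e3, e4, pow_succ]
    nlinarith [ih, h3, h4]

lemma telescope (T : ℕ → ℚ) (N : ℕ) :
    ∑ i ∈ Finset.Icc 1 N, (T (i-1) - T (i+1)) = T 0 + T 1 - T N - T (N+1) := by
  induction N with
  | zero => simp
  | succ N ih =>
    rw [Finset.sum_Icc_succ_top (by omega), ih]
    simp only [Nat.add_sub_cancel]
    ring

theorem stmt_1 (m n N : ℕ) (hm : 0 < m) (hn : 0 < n) (hN : 0 < N) :
    ∑ i ∈ Finset.Icc 1 N,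
      ((-1 : ℚ) ^ (m * (i - 1)) /
        ((lucas (m * (i - 1) + n) : ℚ) * (lucas (m * (i + 1) + n) : ℚ)))
    = (1 / (5 * (Nat.fib n : ℚ) * (Nat.fib (2 * m) : ℚ))) *
        (2 / (lucas n : ℚ) + (lucas m : ℚ) / (lucas (m + n) : ℚ)
          - (lucas (m * N) : ℚ) / (lucas (m * N + n) : ℚ)
          - (lucas (m * (N + 1)) : ℚ) / (lucas (m * (N + 1) + n) : ℚ)) := by
  set T : ℕ → ℚ := fun j => (lucas (m*j) : ℚ) / (lucas (m*j + n) : ℚ) with hT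
  set c : ℚ := 1 / (5 * (Nat.fib n : ℚ) * (Nat.fib (2 * m) : ℚ)) with hc
  have hfn : (Nat.fib n : ℚ) ≠ 0 := by
    have := Nat.fib_pos.mpr hn; positivity
  have hf2m : (Nat.fib (2*m) : ℚ) ≠ 0 := by
    have : 0 < Nat.fib (2*m) := Nat.fib_pos.mpr (by omega); positivity
  have hL : ∀ k, (lucas k : ℚ) ≠ 0 := fun k => by
    have := lucas_pos k; positivity
  have step : ∀ i ∈ Finset.Icc 1 N,
      ((-1 : ℚ) ^ (m * (i - 1)) /
        ((lucas (m * (i - 1) + n) : ℚ) * (lucas (m * (i + 1) + n) : ℚ)))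
      = c * (T (i-1) - T (i+1)) := by
    intro i hi
    simp only [Finset.mem_Icc] at hi
    obtain ⟨j, rfl⟩ : ∃ j, i = j + 1 := ⟨i - 1, by omega⟩
    simp only [Nat.add_sub_cancel, hT, hc]
    have e1 : m * (j + 1 + 1) = m * j + 2 * m := by ring
    have e2 : m * j + 2 * m + n = m * j + (2 * m + n) := by ring
    have hk := key (m*j) (2*m) n
    rw [show m*j + 2*m + n = m*j + (2*m+n) from by ring,
        show m*j + (2*m) = m*j + 2*m from rfl] at hk
    rw [e1]
    have h1 := hL (m*j + n)
    have h2 := hL (m*j + 2*m + n)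
    rw [show m*j + 2*m + n = m*j + (2*m+n) from by ring] at h2 ⊢
    rw [← e2] at hk
    field_simp
    ring_nf
    ring_nf at hk
    linear_combination (-1 : ℚ) * hk
  rw [Finset.sum_congr rfl step, ← Finset.mul_sum, telescope T N]
  have t0 : T 0 = 2 / (lucas n : ℚ) := by simp [hT, lucas]
  have t1 : T 1 = (lucas m : ℚ) / (lucas (m+n) : ℚ) := by simp [hT]
  rw [t0, t1]
end

section
/- For all positive integers m and N, the sum over i from 1 to N of (-1)^(m(i-1)) / (L_{m(i-1)} * L_{m(i+1)}) equals (1/(2 * F_{2m})) * (F_{m(N+1)}/L_{m(N+1)} + F_{mN}/L_{mN} - F_m/L_m). -/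
lemma lucas_pos_s5 : ∀ n, 0 < lucas n
  | 0 => by norm_num [lucas]
  | 1 => by norm_num [lucas]
  | n + 2 => by have := lucas_pos_s5 n; simp only [lucas]; omega

lemma lucas_eq : ∀ n, (lucas n : ℤ) = 2 * Nat.fib (n + 1) - Nat.fib n
  | 0 => by simp [lucas]
  | 1 => by simp [lucas]
  | n + 2 => by
      simp only [lucas]
      push_cast
      rw [lucas_eq (n + 1), lucas_eq n]
      have f3 : (Nat.fib (n + 3) : ℤ) = Nat.fib (n + 2) + Nat.fib (n + 1) := by
        push_cast [Nat.fib_add_two (n := n + 1)]; ring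
      have f2 : (Nat.fib (n + 2) : ℤ) = Nat.fib (n + 1) + Nat.fib n := by
        push_cast [Nat.fib_add_two (n := n)]; ring
      rw [show n + 2 + 1 = n + 3 from rfl, f3, f2]; ring

lemma catalan_fib (d : ℕ) : ∀ j, (Nat.fib (j + 2 * d) : ℤ) * Nat.fib (j + 1)
    - Nat.fib j * Nat.fib (j + 2 * d + 1) = (-1) ^ j * Nat.fib (2 * d)
  | 0 => by simp
  | j + 1 => by
      have h := catalan_fib d j
      have e1 : j + 1 + 2 * d + 1 = (j + 2 * d) + 2 := by ring
      have e2 : j + 1 + 2 * d = (j + 2 * d) + 1 := by ring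
      have e3 : j + 1 + 1 = j + 2 := by ring
      rw [e1, e2, e3, Nat.fib_add_two (n := j + 2 * d), Nat.fib_add_two (n := j)]
      push_cast
      ring_nf
      ring_nf at h
      linarith

lemma key_int (d j : ℕ) : (Nat.fib (j + 2 * d) : ℤ) * lucas j
    - Nat.fib j * lucas (j + 2 * d) = 2 * (-1) ^ j * Nat.fib (2 * d) := by
  rw [lucas_eq, lucas_eq]
  have h := catalan_fib d j
  ring_nf
  ring_nf at h
  linarith

lemma key_q (d j : ℕ) (hd : 0 < d) :
    (-1 : ℚ) ^ j / ((lucas j : ℚ) * (lucas (j + 2 * d) : ℚ))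
    = 1 / (2 * (Nat.fib (2 * d) : ℚ)) *
        ((Nat.fib (j + 2 * d) : ℚ) / (lucas (j + 2 * d) : ℚ)
          - (Nat.fib j : ℚ) / (lucas j : ℚ)) := by
  have h1 : (lucas j : ℚ) ≠ 0 := by
    have := lucas_pos_s5 j; positivity
  have h2 : (lucas (j + 2 * d) : ℚ) ≠ 0 := by
    have := lucas_pos_s5 (j + 2 * d); positivity
  have h3 : (Nat.fib (2 * d) : ℚ) ≠ 0 := by
    have : 0 < Nat.fib (2 * d) := Nat.fib_pos.2 (by omega); positivity
  have hk : (Nat.fib (j + 2 * d) : ℚ) * lucas j - Nat.fib j * lucas (j + 2 * d)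
      = 2 * (-1) ^ j * Nat.fib (2 * d) := by
    exact_mod_cast congrArg (fun z : ℤ => (z : ℚ)) (key_int d j)
  rw [div_sub_div _ _ h2 h1, show (Nat.fib (j + 2 * d) : ℚ) * lucas j
    - (lucas (j + 2 * d) : ℚ) * Nat.fib j = 2 * (-1) ^ j * Nat.fib (2 * d) by
      linear_combination hk]
  field_simp

theorem stmt_5 (m N : ℕ) (hm : 0 < m) (hN : 0 < N) :
    ∑ i ∈ Finset.Icc 1 N,
      ((-1 : ℚ) ^ (m * (i - 1)) /
        ((lucas (m * (i - 1)) : ℚ) * (lucas (m * (i + 1)) : ℚ)))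
    = (1 / (2 * (Nat.fib (2 * m) : ℚ))) *
        ((Nat.fib (m * (N + 1)) : ℚ) / (lucas (m * (N + 1)) : ℚ)
          + (Nat.fib (m * N) : ℚ) / (lucas (m * N) : ℚ)
          - (Nat.fib m : ℚ) / (lucas m : ℚ)) := by
  induction N, hN using Nat.le_induction with
  | base =>
      have hL : (lucas (2 * m) : ℚ) ≠ 0 := by have := lucas_pos_s5 (2 * m); positivity
      have hF : (Nat.fib (2 * m) : ℚ) ≠ 0 := by
        have : 0 < Nat.fib (2 * m) := Nat.fib_pos.2 (by omega); positivity
      simp only [Finset.Icc_self, Finset.sum_singleton]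
      norm_num
      rw [show m * 2 = 2 * m from by ring]
      rw [show lucas 0 = 2 from rfl]
      field_simp
      ring
  | succ N hN ih =>
      rw [Finset.sum_Icc_succ_top (by omega : 1 ≤ N + 1), ih]
      have e1 : N + 1 - 1 = N := rfl
      have e2 : m * (N + 1 + 1) = m * N + 2 * m := by ring
      rw [e1, e2, key_q m (m * N) hm]
      ring
end

section
/- For all positive integers m and n, the infinite series sum over i >= 1 of 1/(F_{m(2i-1)+n} * F_{m(2i+1)+n}) converges to ((-1)^m / (F_n * F_{2m})) * (1/Φ^n - F_m/F_{m+n}), where Φ = (1+√5)/2. -/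
open Real Filter Finset
open scoped goldenRatio Topology

private lemma negpow (k : ℕ) : (-1:ℝ)^k = φ^k * ψ^k := by
  rw [← mul_pow, goldenRatio_mul_goldenConj]

private lemma tele_iden (m a : ℕ) :
    (Nat.fib (a+m) : ℝ) * Nat.fib (a+2*m) - Nat.fib a * Nat.fib (a+3*m)
      = (-1:ℝ)^a * (Nat.fib m * Nat.fib (2*m)) := by
  have h0 : Real.sqrt 5 ≠ 0 := by positivity
  simp only [Real.coe_fib_eq, pow_add, pow_mul', negpow]
  generalize φ^a = X; generalize ψ^a = Y; generalize φ^m = P; generalize ψ^m = Q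
  field_simp
  ring

private lemma e1 (m n : ℕ) : (Nat.fib n : ℝ) * φ^m - Nat.fib (m+n) = -(ψ^n * Nat.fib m) := by
  have h0 : Real.sqrt 5 ≠ 0 := by positivity
  simp only [Real.coe_fib_eq, pow_add]
  generalize φ^m = P; generalize ψ^m = Q; generalize φ^n = C; generalize ψ^n = D
  field_simp
  ring

private lemma e2 (m n : ℕ) : (Nat.fib (m+n) : ℝ) - φ^n * Nat.fib m = ψ^m * Nat.fib n := by
  have h0 : Real.sqrt 5 ≠ 0 := by positivity
  simp only [Real.coe_fib_eq, pow_add]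
  generalize φ^m = P; generalize ψ^m = Q; generalize φ^n = C; generalize ψ^n = D
  field_simp
  ring

private lemma key3 (m n : ℕ) : (-1:ℝ)^n * (ψ^n * φ^n) = (-1)^m * (ψ^m * φ^m) := by
  rw [← mul_pow, ← mul_pow, goldenConj_mul_goldenRatio, ← mul_pow, ← mul_pow]
  norm_num

private lemma fib_pos_real {k : ℕ} (h : 0 < k) : (0:ℝ) < Nat.fib k := by
  exact_mod_cast Nat.fib_pos.mpr h

private lemma diff_pos {k : ℕ} (h : 0 < k) : (0:ℝ) < φ^k - ψ^k := by
  have h1 : (φ:ℝ)^k - ψ^k = Real.sqrt 5 * Nat.fib k := by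
    rw [Real.coe_fib_eq]; field_simp
  rw [h1]
  exact mul_pos (by positivity) (fib_pos_real h)

private lemma tendsto_ratio (m n : ℕ) (hm : 0 < m) (hn : 0 < n) :
    Tendsto (fun i : ℕ => (Nat.fib (2*m*i + n) : ℝ) / Nat.fib (2*m*i + m + n)) atTop
      (𝓝 ((φ^m)⁻¹)) := by
  have hr : |ψ/φ| < 1 := by
    rw [abs_div, abs_of_pos goldenRatio_pos, div_lt_one goldenRatio_pos]
    calc |ψ| < 1 := by
          rw [abs_lt]; exact ⟨neg_one_lt_goldenConj, by nlinarith [goldenConj_neg]⟩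
      _ < φ := one_lt_goldenRatio
  have harith : Tendsto (fun i : ℕ => 2*m*i + n) atTop atTop := by
    apply tendsto_atTop_mono (f := fun i : ℕ => i) ?_ tendsto_id
    intro i
    calc i = 1*i := (one_mul i).symm
      _ ≤ 2*m*i := Nat.mul_le_mul_right i (by omega)
      _ ≤ 2*m*i + n := Nat.le_add_right _ _
  have ht : Tendsto (fun i : ℕ => (ψ/φ)^(2*m*i + n)) atTop (𝓝 0) :=
    (tendsto_pow_atTop_nhds_zero_of_abs_lt_one hr).comp harith
  have heq : ∀ i : ℕ, (Nat.fib (2*m*i + n) : ℝ) / Nat.fib (2*m*i + m + n)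
      = (1 - (ψ/φ)^(2*m*i+n)) / (φ^m - ψ^m * (ψ/φ)^(2*m*i+n)) := by
    intro i
    have hidx : 2*m*i + m + n = (2*m*i + n) + m := by omega
    rw [hidx]
    have han : 0 < 2*m*i + n := by omega
    revert han
    generalize 2*m*i + n = a
    intro han
    have hXpos : (0:ℝ) < φ^a := pow_pos goldenRatio_pos a
    have hd : (0:ℝ) < φ^(a+m) - ψ^(a+m) := diff_pos (by omega)
    have hs : (0:ℝ) < Real.sqrt 5 := by positivity
    rw [Real.coe_fib_eq, Real.coe_fib_eq, pow_add, pow_add]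
    rw [pow_add, pow_add] at hd
    have hψφ : φ * (ψ/φ) = ψ := by
      rw [mul_div_assoc', mul_comm φ ψ, mul_div_assoc, div_self goldenRatio_ne_zero, mul_one]
    have hR : (φ:ℝ)^a * (ψ/φ)^a = ψ^a := by rw [← mul_pow, hψφ]
    set X := (φ:ℝ)^a with hX; set Y := (ψ:ℝ)^a with hY
    set P := (φ:ℝ)^m with hP; set Q := (ψ:ℝ)^m with hQ
    set R := ((ψ:ℝ)/φ)^a with hRdef
    have h2 : P - Q*R ≠ 0 := by
      intro hz
      have h3 : X*(P - Q*R) = X*P - Y*Q := by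
        rw [mul_sub]; rw [show X*(Q*R) = X*R*Q by ring, hR]
      rw [hz, mul_zero] at h3
      linarith
    rw [div_eq_div_iff (by positivity) h2]
    have hs0 : Real.sqrt 5 ≠ 0 := ne_of_gt hs
    field_simp
    linear_combination (P - Q) * hR
  have hden : (φ:ℝ)^m - ψ^m * 0 ≠ 0 := by
    simpa using pow_ne_zero m goldenRatio_ne_zero
  have h : Tendsto (fun i : ℕ => (1 - (ψ/φ)^(2*m*i+n)) / (φ^m - ψ^m * (ψ/φ)^(2*m*i+n))) atTop
      (𝓝 ((1 - 0) / (φ^m - ψ^m * 0))) :=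
    (tendsto_const_nhds.sub ht).div (tendsto_const_nhds.sub (ht.const_mul (ψ^m))) hden
  have h2v : ((1:ℝ) - 0) / (φ^m - ψ^m * 0) = (φ^m)⁻¹ := by
    rw [sub_zero, mul_zero, sub_zero, one_div]
  rw [h2v] at h
  exact Tendsto.congr (fun i => (heq i).symm) h
-- main theorem
theorem stmt_8 (m n : ℕ) (hm : 0 < m) (hn : 0 < n) :
    HasSum (fun i : ℕ =>
      1 / ((Nat.fib (m * (2 * i + 1) + n) : ℝ) * (Nat.fib (m * (2 * i + 3) + n) : ℝ)))
      (((-1 : ℝ) ^ m / ((Nat.fib n : ℝ) * (Nat.fib (2 * m) : ℝ))) *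
        (1 / ((1 + Real.sqrt 5) / 2) ^ n - (Nat.fib m : ℝ) / (Nat.fib (m + n) : ℝ))) := by
  have hFm : (0:ℝ) < Nat.fib m := fib_pos_real hm
  have hFn : (0:ℝ) < Nat.fib n := fib_pos_real hn
  have hF2m : (0:ℝ) < Nat.fib (2*m) := fib_pos_real (by omega)
  have hFmn : (0:ℝ) < Nat.fib (m+n) := fib_pos_real (by omega)
  set f : ℕ → ℝ := fun i =>
    1 / ((Nat.fib (m * (2 * i + 1) + n) : ℝ) * (Nat.fib (m * (2 * i + 3) + n) : ℝ)) with hf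
  set c : ℕ → ℝ := fun i => (Nat.fib (2*m*i + n) : ℝ) / Nat.fib (2*m*i + m + n) with hc
  have hsq : ((-1:ℝ))^(n+1) * (-1)^(n+1) = 1 := by
    rw [← pow_add]
    exact Even.neg_one_pow ⟨n+1, by ring⟩
  have key : ∀ i, f i = (-1:ℝ)^(n+1) / (Nat.fib m * Nat.fib (2*m)) * (c i - c (i+1)) := by
    intro i
    have i1 : m * (2*i+1) + n = (2*m*i+n) + m := by ring
    have i2 : m * (2*i+3) + n = (2*m*i+n) + 3*m := by ring
    have i3 : 2*m*i + m + n = (2*m*i+n) + m := by omega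
    have i4 : 2*m*(i+1) + n = (2*m*i+n) + 2*m := by ring
    have i5 : 2*m*(i+1) + m + n = (2*m*i+n) + 3*m := by omega
    have hsign : (-1:ℝ)^(2*m*i+n) = (-1)^n := by
      rw [pow_add, pow_mul, pow_mul]
      norm_num
    simp only [hf, hc, i1, i2, i3, i4, i5]
    set a := 2*m*i + n with ha
    have hA : (0:ℝ) < Nat.fib (a+m) := fib_pos_real (by omega)
    have hB : (0:ℝ) < Nat.fib (a+3*m) := fib_pos_real (by omega)
    have htele := tele_iden m a
    rw [hsign] at htele
    rw [div_sub_div _ _ (ne_of_gt hA) (ne_of_gt hB)]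
    have hnum : (Nat.fib a : ℝ) * Nat.fib (a+3*m) - Nat.fib (a+m) * Nat.fib (a+2*m)
        = (-1:ℝ)^(n+1) * (Nat.fib m * Nat.fib (2*m)) := by
      rw [pow_succ]
      linarith [htele]
    rw [hnum]
    rw [div_mul_div_comm, ← mul_assoc, hsq, one_mul]
    rw [div_eq_div_iff (by positivity) (by positivity)]
    ring
  have hnn : ∀ i, 0 ≤ f i := by
    intro i
    have := fib_pos_real (show 0 < m*(2*i+1)+n by omega)
    have := fib_pos_real (show 0 < m*(2*i+3)+n by omega)
    positivity
  rw [hasSum_iff_tendsto_nat_of_nonneg hnn]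
  have hps : ∀ N, ∑ i ∈ range N, f i
      = (-1:ℝ)^(n+1) / (Nat.fib m * Nat.fib (2*m)) * (c 0 - c N) := by
    intro N
    rw [sum_congr rfl (fun i _ => key i), ← mul_sum, sum_range_sub' c]
  have hlim := tendsto_ratio m n hm hn
  have htend : Tendsto (fun N => ∑ i ∈ range N, f i) atTop
      (𝓝 ((-1:ℝ)^(n+1) / (Nat.fib m * Nat.fib (2*m)) * (c 0 - (φ^m)⁻¹))) := by
    simp only [hps]
    exact (tendsto_const_nhds.sub hlim).const_mul _
  have hc0 : c 0 = (Nat.fib n : ℝ) / Nat.fib (m+n) := by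
    show (Nat.fib (2*m*0+n) : ℝ) / Nat.fib (2*m*0+m+n) = _
    have e0 : 2*m*0+n = n := by ring
    have e0' : 2*m*0+m+n = m+n := by ring
    rw [e0, e0']
  have hval : (-1:ℝ)^(n+1) / (Nat.fib m * Nat.fib (2*m)) * (c 0 - (φ^m)⁻¹)
      = ((-1 : ℝ) ^ m / ((Nat.fib n : ℝ) * (Nat.fib (2 * m) : ℝ))) *
        (1 / ((1 + Real.sqrt 5) / 2) ^ n - (Nat.fib m : ℝ) / (Nat.fib (m + n) : ℝ)) := by
    rw [hc0, show ((1 + Real.sqrt 5)/2 : ℝ) = φ from rfl]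
    have hφm : (0:ℝ) < φ^m := pow_pos goldenRatio_pos m
    have hφn : (0:ℝ) < φ^n := pow_pos goldenRatio_pos n
    have he1 : (Nat.fib n : ℝ)/Nat.fib (m+n) - (φ^m)⁻¹
        = -(ψ^n * Nat.fib m)/((Nat.fib (m+n) : ℝ) * φ^m) := by
      rw [inv_eq_one_div, div_sub_div _ _ (ne_of_gt hFmn) (ne_of_gt hφm), mul_one, e1]
    have he2 : 1/(φ:ℝ)^n - (Nat.fib m : ℝ)/Nat.fib (m+n)
        = (ψ^m * Nat.fib n)/(φ^n * (Nat.fib (m+n) : ℝ)) := by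
      rw [div_sub_div _ _ (ne_of_gt hφn) (ne_of_gt hFmn), one_mul, e2]
    rw [he1, he2, pow_succ]
    have k3 := key3 m n
    set P := (φ:ℝ)^m with hPd
    set Q := (ψ:ℝ)^m with hQd
    set C := (φ:ℝ)^n with hCd
    set D := (ψ:ℝ)^n with hDd
    set u := (-1:ℝ)^n with hud
    set v := (-1:ℝ)^m with hvd
    field_simp
    linear_combination k3
  rw [← hval]
  exact htend
end

section
/- For all positive integers m and n, the infinite series sum over i >= 1 of 1/(F_{2m(i-1)+n} * F_{2m(i+1)+n}) converges to (1/(F_n * F_{4m})) * (2/Φ^n - F_{2m}/F_{2m+n}), where Φ = (1+√5)/2. -/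
open Filter Real Finset
open scoped goldenRatio Topology

lemma docagne_s9 (k b : ℕ) :
    ((b + k).fib : ℤ) * (b + 1).fib - (b + k + 1).fib * b.fib = (-1) ^ b * k.fib := by
  induction b with
  | zero => simp
  | succ b ih =>
    have e1 : ((b + k + 2).fib : ℤ) = (b + k).fib + (b + k + 1).fib := by
      exact_mod_cast Nat.fib_add_two
    have e2 : ((b + 2).fib : ℤ) = (b.fib : ℤ) + (b + 1).fib := by
      exact_mod_cast Nat.fib_add_two
    rw [show b + 1 + k = b + k + 1 from by ring, show b + k + 1 + 1 = b + k + 2 from rfl,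
      show b + 1 + 1 = b + 2 from rfl, e1, e2]
    linear_combination -ih

lemma telesc (c : ℝ) (g : ℕ → ℝ) (N : ℕ) :
    ∑ i ∈ Finset.range N, c * (g i - g (i + 2)) = c * (g 0 + g 1 - g N - g (N + 1)) := by
  induction N with
  | zero =>
    rw [Finset.sum_range_zero, show (0:ℕ) + 1 = 1 from rfl]
    ring
  | succ N ih =>
    rw [Finset.sum_range_succ, ih, show N + 1 + 1 = N + 2 from rfl]
    ring

theorem stmt_9 (m n : ℕ) (hm : 0 < m) (hn : 0 < n) :
    HasSum (fun i : ℕ =>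
      1 / ((Nat.fib (2 * m * i + n) : ℝ) * (Nat.fib (2 * m * (i + 2) + n) : ℝ)))
      ((1 / ((Nat.fib n : ℝ) * (Nat.fib (4 * m) : ℝ))) *
        (2 / ((1 + Real.sqrt 5) / 2) ^ n - (Nat.fib (2 * m) : ℝ) / (Nat.fib (2 * m + n) : ℝ))) := by
  have fibpos : ∀ j : ℕ, 0 < j → (0:ℝ) < Nat.fib j := by
    intro j hj; exact_mod_cast Nat.fib_pos.2 hj
  have hq : ∀ i : ℕ, 0 < 2 * m * i + n := fun i => by omega
  set f : ℕ → ℝ := fun i =>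
      1 / ((Nat.fib (2 * m * i + n) : ℝ) * (Nat.fib (2 * m * (i + 2) + n) : ℝ)) with hf
  set g : ℕ → ℝ := fun i => (Nat.fib (2 * m * i + n + 1) : ℝ) / (Nat.fib (2 * m * i + n) : ℝ)
    with hg
  set c : ℝ := (-1 : ℝ) ^ n / (Nat.fib (4 * m) : ℝ) with hc
  have hF4 : (Nat.fib (4 * m) : ℝ) ≠ 0 := ne_of_gt (fibpos _ (by omega))
  have hx : ((-1 : ℝ)) ^ n ≠ 0 := pow_ne_zero n (neg_ne_zero.mpr one_ne_zero)
  have hx2 : ((-1 : ℝ)) ^ (n * 2) = 1 := by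
    rw [mul_comm, pow_mul]; norm_num
  -- term identity
  have key : ∀ i : ℕ, f i = c * (g i - g (i + 2)) := by
    intro i
    have e : 2 * m * (i + 2) + n = 2 * m * i + n + 4 * m := by ring
    have dR : (Nat.fib (2 * m * i + n + 4 * m) : ℝ) * Nat.fib (2 * m * i + n + 1)
        - Nat.fib (2 * m * i + n + 4 * m + 1) * Nat.fib (2 * m * i + n)
        = (-1) ^ (2 * m * i + n) * Nat.fib (4 * m) := by
      exact_mod_cast docagne_s9 (4 * m) (2 * m * i + n)
    have hsgn : ((-1 : ℝ)) ^ (2 * m * i + n) = (-1) ^ n := by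
      rw [pow_add, mul_assoc, pow_mul]; norm_num
    rw [hsgn] at dR
    have hA : (Nat.fib (2 * m * i + n) : ℝ) ≠ 0 := ne_of_gt (fibpos _ (hq i))
    have hB : (Nat.fib (2 * m * i + n + 4 * m) : ℝ) ≠ 0 := ne_of_gt (fibpos _ (by omega))
    simp only [hf, hg, hc, e]
    field_simp
    linear_combination (-(-1 : ℝ) ^ n) * dR - ((Nat.fib (4 * m) : ℝ)) * hx2
  have hfnonneg : ∀ i, 0 ≤ f i := by
    intro i
    have h1 := fibpos _ (hq i)
    have h2 := fibpos (2 * m * (i + 2) + n) (by positivity)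
    simp only [hf]
    positivity
  -- partial sums
  have psum : ∀ N : ℕ, ∑ i ∈ Finset.range N, f i = c * (g 0 + g 1 - g N - g (N + 1)) := by
    intro N
    rw [Finset.sum_congr rfl fun i _ => key i]
    exact telesc c g N
  -- limit of g
  have hgi : ∀ i, g i = φ + ψ ^ (2 * m * i + n) / (Nat.fib (2 * m * i + n) : ℝ) := by
    intro i
    have hA : (Nat.fib (2 * m * i + n) : ℝ) ≠ 0 := ne_of_gt (fibpos _ (hq i))
    have hb := fib_succ_sub_goldenRatio_mul_fib (2 * m * i + n)
    simp only [hg]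
    rw [div_eq_iff hA, add_mul, div_mul_cancel₀ _ hA]
    linear_combination hb
  have habs : |ψ| < 1 := by
    rw [abs_lt]; constructor
    · linarith [neg_one_lt_goldenConj]
    · linarith [goldenConj_neg]
  have htail : Tendsto (fun i : ℕ => ψ ^ (2 * m * i + n) / (Nat.fib (2 * m * i + n) : ℝ))
      atTop (𝓝 0) := by
    apply squeeze_zero_norm (a := fun i : ℕ => |ψ| ^ i)
    · intro i
      have h1 : (1 : ℝ) ≤ Nat.fib (2 * m * i + n) := by
        exact_mod_cast Nat.fib_pos.2 (hq i)
      have hle : i ≤ 2 * m * i + n := by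
        have h' : 1 * i ≤ 2 * m * i := Nat.mul_le_mul_right i (by omega)
        rw [one_mul] at h'
        exact le_trans h' (Nat.le_add_right _ n)
      calc ‖ψ ^ (2 * m * i + n) / (Nat.fib (2 * m * i + n) : ℝ)‖
          = |ψ| ^ (2 * m * i + n) / (Nat.fib (2 * m * i + n) : ℝ) := by
            rw [norm_div, norm_pow, Real.norm_eq_abs, Real.norm_natCast]
        _ ≤ |ψ| ^ (2 * m * i + n) := by
            apply div_le_self (by positivity) h1
        _ ≤ |ψ| ^ i := pow_le_pow_of_le_one (abs_nonneg _) habs.le hle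
    · exact tendsto_pow_atTop_nhds_zero_of_lt_one (abs_nonneg _) habs
  have hglim : Tendsto g atTop (𝓝 φ) := by
    have := htail.const_add φ
    simp only [add_zero] at this
    exact this.congr fun i => (hgi i).symm
  have hglim1 : Tendsto (fun N : ℕ => g (N + 1)) atTop (𝓝 φ) :=
    hglim.comp (tendsto_add_atTop_nat 1)
  have hS : Tendsto (fun N : ℕ => ∑ i ∈ Finset.range N, f i) atTop
      (𝓝 (c * (g 0 + g 1 - φ - φ))) := by
    have : Tendsto (fun N : ℕ => c * (g 0 + g 1 - g N - g (N + 1))) atTop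
        (𝓝 (c * (g 0 + g 1 - φ - φ))) :=
      (((tendsto_const_nhds.sub hglim).sub hglim1).const_mul c).congr (fun N => by ring)
    exact this.congr fun N => (psum N).symm
  have H : HasSum f (c * (g 0 + g 1 - φ - φ)) :=
    (hasSum_iff_tendsto_nat_of_nonneg hfnonneg _).2 hS
  -- identify the value
  convert H using 1
  have hφ : ((1 + Real.sqrt 5) / 2) = φ := rfl
  have hn0 : (Nat.fib n : ℝ) ≠ 0 := ne_of_gt (fibpos _ hn)
  have hmn : (Nat.fib (2 * m + n) : ℝ) ≠ 0 := ne_of_gt (fibpos _ (by omega))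
  have hφn : (φ : ℝ) ^ n ≠ 0 := by positivity
  have hψφ : φ ^ n * ψ ^ n = (-1 : ℝ) ^ n := by
    rw [← mul_pow, goldenRatio_mul_goldenConj]
  have hbinet : (Nat.fib (n + 1) : ℝ) - φ * Nat.fib n = ψ ^ n := fib_succ_sub_goldenRatio_mul_fib n
  have hdoc : (Nat.fib (2 * m + n) : ℝ) * Nat.fib (n + 1)
      - Nat.fib (2 * m + n + 1) * Nat.fib n = (-1) ^ n * Nat.fib (2 * m) := by
    have := docagne_s9 (2 * m) n
    rw [show n + 2 * m = 2 * m + n from by ring] at this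
    exact_mod_cast this
  have hg0 : g 0 = (Nat.fib (n + 1) : ℝ) / Nat.fib n := by
    simp only [hg]; norm_num
  have hg1 : g 1 = (Nat.fib (2 * m + n + 1) : ℝ) / Nat.fib (2 * m + n) := by
    simp only [hg]; rw [show 2 * m * 1 + n = 2 * m + n from by ring]
  have hxsq : ((-1 : ℝ)) ^ n * (-1 : ℝ) ^ n = 1 := by
    rw [← pow_add, ← two_mul, mul_comm]; exact hx2
  rw [hg0, hg1, hφ, hc]
  generalize hQ : (goldenConj : ℝ) = Q at hψφ hbinet
  generalize hP : (goldenRatio : ℝ) = P at hψφ hbinet hφn ⊢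
  field_simp
  linear_combination
    (-2 * (-1:ℝ)^n * P^n * Nat.fib (2*m+n)) * hbinet
    + ((-1:ℝ)^n * P^n) * hdoc
    + (P^n * Nat.fib (2*m) - 2 * Nat.fib (2*m+n)) * hxsq
    + (-2 * (-1:ℝ)^n * Nat.fib (2*m+n)) * hψφ
end

section
/- For all positive integers m and n, the infinite alternating series sum over i >= 1 of (-1)^i / (F_{2m(i-1)+n} * F_{2m(i+1)+n}) converges to -F_{2m} / (F_n * F_{4m} * F_{2m+n}). -/
open Filter Finset

private lemma cassiniR (k : ℕ) :
    (Nat.fib (k + 1) : ℝ) ^ 2 - (Nat.fib k : ℝ) * (Nat.fib (k + 2) : ℝ) = (-1) ^ k := by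
  induction k with
  | zero => simp
  | succ k ih =>
    have e2 : (Nat.fib (k + 2) : ℝ) = (Nat.fib k : ℝ) + (Nat.fib (k + 1) : ℝ) := by
      rw [Nat.fib_add_two]; push_cast; ring
    have e1 : (Nat.fib (k + 1 + 2) : ℝ) = (Nat.fib (k + 1) : ℝ) + (Nat.fib (k + 2) : ℝ) := by
      rw [Nat.fib_add_two]; push_cast; ring
    rw [show k + 1 + 1 = k + 2 from rfl, e1, e2, pow_succ]
    rw [e2] at ih
    linear_combination -ih

private lemma fib_keyR (m : ℕ) (hm : 0 < m) : ∀ j : ℕ,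
    (Nat.fib (2 * m) : ℝ) * ((Nat.fib j : ℝ) + (Nat.fib (j + 4 * m) : ℝ))
      = (Nat.fib (4 * m) : ℝ) * (Nat.fib (j + 2 * m) : ℝ) := by
  intro j
  induction j using Nat.twoStepInduction with
  | zero =>
    simp only [Nat.fib_zero, Nat.cast_zero, zero_add, Nat.zero_add]
    ring
  | one =>
    obtain ⟨m', rfl⟩ : ∃ m', m = m' + 1 := ⟨m - 1, by omega⟩
    set x : ℝ := (Nat.fib (2 * m' + 1) : ℝ) with hx
    set y : ℝ := (Nat.fib (2 * (m' + 1)) : ℝ) with hy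
    set z : ℝ := (Nat.fib (2 * (m' + 1) + 1) : ℝ) with hz
    have hcass2 : y ^ 2 - x * z = -1 := by
      have c2 := cassiniR (2 * m' + 1)
      rw [show 2 * m' + 1 + 1 = 2 * (m' + 1) from by omega,
        show 2 * m' + 1 + 2 = 2 * (m' + 1) + 1 from by omega] at c2
      rw [← hx, ← hy, ← hz] at c2
      rw [c2, Odd.neg_one_pow ⟨m', by ring⟩]
    have hfib2a : (Nat.fib (4 * (m' + 1)) : ℝ) = x * y + y * z := by
      have h : 4 * (m' + 1) = (2 * m' + 1) + (2 * m' + 2) + 1 := by omega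
      rw [h, Nat.fib_add]
      push_cast
      rw [show 2 * m' + 1 + 1 = 2 * (m' + 1) from by omega]
    have hfib2a1 : (Nat.fib (1 + 4 * (m' + 1)) : ℝ) = y ^ 2 + z ^ 2 := by
      have h : 1 + 4 * (m' + 1) = (2 * (m' + 1)) + (2 * (m' + 1)) + 1 := by omega
      rw [h, Nat.fib_add]
      push_cast
      rw [← hy, ← hz]
      ring
    rw [show Nat.fib 1 = 1 from rfl, show 1 + 2 * (m' + 1) = 2 * (m' + 1) + 1 from by omega,
      hfib2a1, hfib2a, ← hz]
    push_cast
    linear_combination y * hcass2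
  | more j ih1 ih2 =>
    rw [show j + 2 + 4 * m = (j + 4 * m) + 2 by omega, show j + 2 + 2 * m = (j + 2 * m) + 2 by omega,
      Nat.fib_add_two, Nat.fib_add_two, Nat.fib_add_two]
    push_cast
    rw [show j + 1 + 4 * m = (j + 4 * m) + 1 by omega, show j + 1 + 2 * m = (j + 2 * m) + 1 by omega] at ih2
    linarith [ih1, ih2]

private lemma two_pow_le_fib : ∀ k : ℕ, 2 ^ k ≤ Nat.fib (2 * k + 1) := by
  intro k
  induction k with
  | zero => simp
  | succ k ih =>
    have h : Nat.fib (2 * k + 1) ≤ Nat.fib (2 * k + 1 + 1) := Nat.fib_le_fib_succ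
    have h2 : 2 * (k + 1) + 1 = (2 * k + 1) + 2 := by omega
    rw [h2, Nat.fib_add_two, pow_succ]
    omega

private lemma tele_alg (A B C D2 D4 s : ℝ) (hA : A ≠ 0) (hB : B ≠ 0) (hC : C ≠ 0)
    (hD4 : D4 ≠ 0) (key : D2 * (A + C) = D4 * B) :
    s * (-1) / (A * C) = s * (-1) * D2 / (D4 * (B * C)) - s * D2 / (D4 * (A * B)) := by
  field_simp
  linear_combination s * key

theorem stmt_13 (m n : ℕ) (hm : 0 < m) (hn : 0 < n) :
    HasSum (fun i : ℕ =>
      (-1 : ℝ) ^ (i + 1) /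
        ((Nat.fib (2 * m * i + n) : ℝ) * (Nat.fib (2 * m * (i + 2) + n) : ℝ)))
      (-(Nat.fib (2 * m) : ℝ) /
        ((Nat.fib n : ℝ) * (Nat.fib (4 * m) : ℝ) * (Nat.fib (2 * m + n) : ℝ))) := by
  set f : ℕ → ℝ := fun i =>
      (-1 : ℝ) ^ (i + 1) /
        ((Nat.fib (2 * m * i + n) : ℝ) * (Nat.fib (2 * m * (i + 2) + n) : ℝ)) with hf
  set t : ℕ → ℝ := fun i =>
      (-1 : ℝ) ^ i * (Nat.fib (2 * m) : ℝ) /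
        ((Nat.fib (4 * m) : ℝ) * ((Nat.fib (2 * m * i + n) : ℝ) * (Nat.fib (2 * m * (i + 1) + n) : ℝ))) with ht
  have fibpos : ∀ k : ℕ, 0 < k → (0:ℝ) < (Nat.fib k : ℝ) := by
    intro k hk; exact_mod_cast Nat.fib_pos.mpr hk
  have hA : ∀ i : ℕ, (0:ℝ) < (Nat.fib (2 * m * i + n) : ℝ) :=
    fun i => fibpos _ (Nat.lt_of_lt_of_le hn (Nat.le_add_left n (2 * m * i)))
  have h4m : (0:ℝ) < (Nat.fib (4 * m) : ℝ) := fibpos _ (by omega)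
  have hlow : ∀ i : ℕ, (2:ℝ) ^ i ≤ (Nat.fib (2 * m * i + n) : ℝ) := by
    intro i
    have h1 : 2 * i + 1 ≤ 2 * m * i + n := by
      have : 2 * i ≤ 2 * m * i := Nat.mul_le_mul_right i (by omega : 2 ≤ 2 * m)
      omega
    have := (two_pow_le_fib i).trans (Nat.fib_mono h1)
    exact_mod_cast this
  have hge1 : ∀ k : ℕ, 0 < k → (1:ℝ) ≤ (Nat.fib k : ℝ) := by
    intro k hk; exact_mod_cast Nat.fib_pos.mpr hk
  -- telescoping identity
  have htel : ∀ i : ℕ, f i = t (i + 1) - t i := by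
    intro i
    have key := fib_keyR m hm (2 * m * i + n)
    have e1 : 2 * m * i + n + 4 * m = 2 * m * (i + 2) + n := by ring_nf
    have e2 : 2 * m * i + n + 2 * m = 2 * m * (i + 1) + n := by ring_nf
    rw [e1, e2] at key
    have pA := hA i
    have pB := hA (i + 1)
    have pC := hA (i + 2)
    have alg := tele_alg _ _ _ (Nat.fib (2 * m) : ℝ) _ ((-1 : ℝ) ^ i)
      (ne_of_gt pA) (ne_of_gt pB) (ne_of_gt pC) (ne_of_gt h4m) key
    simp only [hf, ht, show i + 1 + 1 = i + 2 from rfl, pow_succ]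
    linear_combination alg
  -- summability
  have hsum : Summable f := by
    apply Summable.of_norm_bounded (g := fun i => (1/2 : ℝ) ^ i)
      (summable_geometric_of_lt_one (by norm_num) (by norm_num))
    intro i
    have pA := hA i
    have pC := hA (i + 2)
    have h1 : ‖f i‖ = 1 / ((Nat.fib (2 * m * i + n) : ℝ) * (Nat.fib (2 * m * (i + 2) + n) : ℝ)) := by
      simp only [hf]
      rw [norm_div, norm_pow, norm_neg, norm_one, one_pow,
        Real.norm_of_nonneg (by positivity : (0:ℝ) ≤ (Nat.fib (2 * m * i + n) : ℝ) * (Nat.fib (2 * m * (i + 2) + n) : ℝ))]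
    rw [h1, div_pow, one_pow]
    apply one_div_le_one_div_of_le (by positivity)
    calc (2:ℝ) ^ i ≤ (Nat.fib (2 * m * i + n) : ℝ) := hlow i
      _ = (Nat.fib (2 * m * i + n) : ℝ) * 1 := by ring
      _ ≤ _ := mul_le_mul_of_nonneg_left (hge1 _ (Nat.lt_of_lt_of_le hn (Nat.le_add_left _ _))) pA.le
  -- t tends to 0
  have ht0 : Tendsto t atTop (nhds 0) := by
    refine squeeze_zero_norm (a := fun i => (Nat.fib (2 * m) : ℝ) * (1/2 : ℝ) ^ i) ?_ ?_
    · intro i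
      have pA := hA i
      have pB := hA (i + 1)
      have h1 : ‖t i‖ = (Nat.fib (2 * m) : ℝ) /
          ((Nat.fib (4 * m) : ℝ) * ((Nat.fib (2 * m * i + n) : ℝ) * (Nat.fib (2 * m * (i + 1) + n) : ℝ))) := by
        simp only [ht]
        rw [norm_div, norm_mul, norm_pow, norm_neg, norm_one, one_pow, one_mul,
          Real.norm_of_nonneg (by positivity : (0:ℝ) ≤ (Nat.fib (2 * m) : ℝ)),
          Real.norm_of_nonneg (by positivity : (0:ℝ) ≤ (Nat.fib (4 * m) : ℝ) * ((Nat.fib (2 * m * i + n) : ℝ) * (Nat.fib (2 * m * (i + 1) + n) : ℝ)))]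
      rw [h1, div_le_iff₀ (by positivity)]
      have hx : (1:ℝ) ≤ (1/2)^i * ((Nat.fib (4 * m) : ℝ) * ((Nat.fib (2 * m * i + n) : ℝ) * (Nat.fib (2 * m * (i + 1) + n) : ℝ))) := by
        calc (1:ℝ) = (1/2)^i * (2:ℝ)^i := by rw [← mul_pow]; norm_num
          _ ≤ _ := by
            apply mul_le_mul_of_nonneg_left _ (by positivity)
            calc (2:ℝ)^i ≤ (Nat.fib (2 * m * i + n) : ℝ) := hlow i
              _ = 1 * ((Nat.fib (2 * m * i + n) : ℝ) * 1) := by ring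
              _ ≤ _ := by
                  apply mul_le_mul (hge1 _ (by omega)) _ (by positivity) (by positivity)
                  exact mul_le_mul_of_nonneg_left
                    (hge1 _ (Nat.lt_of_lt_of_le hn (Nat.le_add_left _ _))) pA.le
      calc (Nat.fib (2 * m) : ℝ) = (Nat.fib (2 * m) : ℝ) * 1 := by ring
        _ ≤ (Nat.fib (2 * m) : ℝ) * ((1/2)^i * ((Nat.fib (4 * m) : ℝ) * ((Nat.fib (2 * m * i + n) : ℝ) * (Nat.fib (2 * m * (i + 1) + n) : ℝ)))) :=
            mul_le_mul_of_nonneg_left hx (by positivity)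
        _ = _ := by ring
    · have h2 : Tendsto (fun i : ℕ => (1/2 : ℝ) ^ i) atTop (nhds 0) :=
        tendsto_pow_atTop_nhds_zero_of_lt_one (by norm_num) (by norm_num)
      simpa using h2.const_mul (Nat.fib (2 * m) : ℝ)
  -- conclude
  rw [hsum.hasSum_iff_tendsto_nat]
  have hps : (fun N : ℕ => ∑ i ∈ Finset.range N, f i) = fun N => t N - t 0 := by
    funext N
    calc ∑ i ∈ Finset.range N, f i = ∑ i ∈ Finset.range N, (t (i+1) - t i) := by
          exact Finset.sum_congr rfl fun i _ => htel i
      _ = t N - t 0 := Finset.sum_range_sub t N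
  rw [hps]
  have hconv : Tendsto (fun N => t N - t 0) atTop (nhds (0 - t 0)) := ht0.sub_const (t 0)
  convert hconv using 2
  simp only [ht]
  have pn := fibpos n hn
  have p2mn := fibpos (2 * m + n) (by omega)
  simp only [Nat.mul_zero, Nat.zero_add, pow_zero, Nat.mul_one, zero_mul, mul_zero, zero_add, one_mul]
  rw [zero_sub]
  field_simp
end

section
/- Let (w_k) be a Horadam sequence: w_0 = a, w_1 = b, w_{k+2} = p w_{k+1} - q w_k (with a, b, p, q rational, q ≠ 0), extended to all integer indices, and let (u_k) be the Lucas sequence of the first kind with the same p, q. Then for all integers n, r, s, w_n * w_{n+r+s} - w_{n+r} * w_{n+s} = e_w * q^n * u_r * u_s, where e_w = p*a*b - q*a^2 - b^2. -/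
/-- Shift lemma: any sequence `v` satisfying the recurrence can be expressed
in terms of the Lucas sequence `u`. -/
lemma aux_shift (p q : ℚ) (hq : q ≠ 0) (u v : ℤ → ℚ)
    (hu0 : u 0 = 0) (hu1 : u 1 = 1)
    (hurec : ∀ k : ℤ, u (k + 2) = p * u (k + 1) - q * u k)
    (hvrec : ∀ k : ℤ, v (k + 2) = p * v (k + 1) - q * v k)
    (n : ℤ) :
    ∀ t : ℤ, v (n + t) = u t * v (n + 1) - q * u (t - 1) * v n := by
  have hum1 : u (-1) = -q⁻¹ := by
    have h := hurec (-1)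
    norm_num [hu0, hu1] at h
    field_simp
    linarith
  have key : ∀ t : ℤ,
      (v (n + t) = u t * v (n + 1) - q * u (t - 1) * v n) ∧
      (v (n + (t + 1)) = u (t + 1) * v (n + 1) - q * u (t + 1 - 1) * v n) := by
    intro t
    induction t using Int.induction_on with
    | zero =>
      constructor
      · norm_num [hu0, hum1]
        field_simp
      · norm_num [hu1, hu0]
    | succ k ih =>
      obtain ⟨ht, ht1⟩ := ih
      refine ⟨ht1, ?_⟩
      have h1 := hvrec (n + k)
      have h2 := hurec k
      have h2' := hurec ((k : ℤ) - 1)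
      rw [show (k : ℤ) - 1 + 2 = k + 1 by ring, show (k : ℤ) - 1 + 1 = k by ring] at h2'
      rw [show n + ((k : ℤ) + 1) = n + k + 1 by ring, show (k : ℤ) + 1 - 1 = k by ring] at ht1
      rw [show n + ((k : ℤ) + 1 + 1) = n + k + 2 by ring,
        show (k : ℤ) + 1 + 1 - 1 = k + 1 by ring, show (k : ℤ) + 1 + 1 = k + 2 by ring]
      rw [h1, ht1, ht, h2, h2']
      ring
    | pred k ih =>
      obtain ⟨ht, ht1⟩ := ih
      rw [show (-(k : ℤ) + 1 - 1) = -k by ring] at ht1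
      constructor
      · -- prove P (-k - 1)
        have h1 := hvrec (n + (-(k : ℤ) - 1))
        rw [show n + (-(k : ℤ) - 1) + 2 = n + (-(k : ℤ) + 1) by ring,
          show n + (-(k : ℤ) - 1) + 1 = n + -(k : ℤ) by ring] at h1
        have h2 := hurec (-(k : ℤ) - 1)
        rw [show -(k : ℤ) - 1 + 2 = -(k : ℤ) + 1 by ring,
          show -(k : ℤ) - 1 + 1 = -(k : ℤ) by ring] at h2
        have h3 := hurec (-(k : ℤ) - 2)
        rw [show -(k : ℤ) - 2 + 2 = -(k : ℤ) by ring,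
          show -(k : ℤ) - 2 + 1 = -(k : ℤ) - 1 by ring] at h3
        have hv' : v (n + (-(k : ℤ) - 1))
            = (p * v (n + -(k : ℤ)) - v (n + (-(k : ℤ) + 1))) / q := by
          field_simp
          linarith [h1]
        have hu2' : u (-(k : ℤ) - 1 - 1) = (p * u (-(k : ℤ) - 1) - u (-(k : ℤ))) / q := by
          rw [show -(k : ℤ) - 1 - 1 = -(k : ℤ) - 2 by ring]
          field_simp
          linarith [h3]
        rw [hv', hu2', ht, ht1, h2]
        field_simp
        ring
      · rw [show -(k : ℤ) - 1 + 1 = -(k : ℤ) by ring]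
        exact ht
  exact fun t => (key t).1

lemma aux_det (a b p q : ℚ) (hq : q ≠ 0) (w : ℤ → ℚ)
    (hw0 : w 0 = a) (hw1 : w 1 = b)
    (hwrec : ∀ k : ℤ, w (k + 2) = p * w (k + 1) - q * w k) :
    ∀ n : ℤ, p * w n * w (n + 1) - q * w n ^ 2 - w (n + 1) ^ 2
      = (p * a * b - q * a ^ 2 - b ^ 2) * q ^ n := by
  intro n
  induction n using Int.induction_on with
  | zero => norm_num [hw0, hw1]
  | succ k ih =>
    have h := hwrec k
    rw [show (k : ℤ) + 1 + 1 = k + 2 by ring]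
    have hz : (q : ℚ) ^ ((k : ℤ) + 1) = q ^ (k : ℤ) * q := zpow_add_one₀ hq k
    rw [h, hz]
    linear_combination q * ih
  | pred k ih =>
    have h := hwrec (-(k : ℤ) - 1)
    rw [show -(k : ℤ) - 1 + 2 = -(k : ℤ) + 1 by ring,
      show -(k : ℤ) - 1 + 1 = -(k : ℤ) by ring] at h
    have hz : (q : ℚ) ^ (-(k : ℤ)) = q ^ (-(k : ℤ) - 1) * q := by
      rw [← zpow_add_one₀ hq]
      congr 1
      ring
    rw [h, hz] at ih
    rw [show -(k : ℤ) - 1 + 1 = -(k : ℤ) by ring]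
    apply mul_left_cancel₀ hq
    linear_combination ih

theorem stmt_17 (a b p q : ℚ) (hq : q ≠ 0)
    (w u : ℤ → ℚ)
    (hw0 : w 0 = a) (hw1 : w 1 = b)
    (hu0 : u 0 = 0) (hu1 : u 1 = 1)
    (hwrec : ∀ k : ℤ, w (k + 2) = p * w (k + 1) - q * w k)
    (hurec : ∀ k : ℤ, u (k + 2) = p * u (k + 1) - q * u k)
    (n r s : ℤ) :
    w n * w (n + r + s) - w (n + r) * w (n + s)
      = (p * a * b - q * a ^ 2 - b ^ 2) * q ^ n * u r * u s := by
  have hsw := aux_shift p q hq u w hu0 hu1 hurec hwrec n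
  have h1 := hsw (r + s)
  rw [show n + (r + s) = n + r + s by ring] at h1
  have h2 := hsw r
  have h3 := hsw s
  have h4 := aux_shift p q hq u u hu0 hu1 hurec hurec r s
  have h5 := aux_shift p q hq u u hu0 hu1 hurec hurec (r - 1) s
  rw [show r - 1 + s = r + s - 1 by ring, show r - 1 + 1 = r by ring] at h5
  have h6 := hurec (r - 1)
  rw [show r - 1 + 2 = r + 1 by ring, show r - 1 + 1 = r by ring] at h6
  have g := aux_det a b p q hq w hw0 hw1 hwrec n
  rw [h1, h2, h3, h4, h5, h6, ← g]
  ring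
end

section
/- Let (u_k) and (v_k) be the Lucas sequences of the first and second kind for parameters p, q (rational, q ≠ 0), extended to integer indices. Then for all positive integers m, k, N, assuming all the denominators u_{mi}, u_{m(i+N)} for 1 ≤ i ≤ 2k and u_{mi}, u_{m(i+2k)} for 1 ≤ i ≤ N and u_{2km} are nonzero, the sum over i from 1 to N of q^{mi} / (u_{mi} * u_{m(i+2k)}) equals (1/(2 * u_{2km})) * the sum over i from 1 to 2k of (v_{mi}/u_{mi} - v_{m(i+N)}/u_{m(i+N)}). -/
theorem stmt_18 (p q : ℚ) (hq : q ≠ 0)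
    (u v : ℕ → ℚ)
    (hu0 : u 0 = 0) (hu1 : u 1 = 1) (hv0 : v 0 = 2) (hv1 : v 1 = p)
    (hurec : ∀ k : ℕ, u (k + 2) = p * u (k + 1) - q * u k)
    (hvrec : ∀ k : ℕ, v (k + 2) = p * v (k + 1) - q * v k)
    (m k N : ℕ) (hm : 0 < m) (hk : 0 < k) (hN : 0 < N)
    (hden1 : ∀ i ∈ Finset.Icc 1 (2 * k), u (m * i) ≠ 0 ∧ u (m * (i + N)) ≠ 0)
    (hden2 : ∀ i ∈ Finset.Icc 1 N, u (m * i) ≠ 0 ∧ u (m * (i + 2 * k)) ≠ 0)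
    (hden3 : u (2 * k * m) ≠ 0) :
    ∑ i ∈ Finset.Icc 1 N, q ^ (m * i) / (u (m * i) * u (m * (i + 2 * k)))
      = (1 / (2 * u (2 * k * m))) *
          ∑ i ∈ Finset.Icc 1 (2 * k),
            (v (m * i) / u (m * i) - v (m * (i + N)) / u (m * (i + N))) := by
  have hA : ∀ a : ℕ, v a * u (a+1) - u a * v (a+1) = 2 * q ^ a := by
    intro a
    induction a with
    | zero => simp [hu0, hu1, hv0, hv1]
    | succ n ih =>
      have h1 := hurec n; have h2 := hvrec n
      have e : v (n+1) * u (n+1+1) - u (n+1) * v (n+1+1)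
          = q * (v n * u (n+1) - u n * v (n+1)) := by
        show v (n+1) * u (n+2) - u (n+1) * v (n+2) = _
        rw [h1, h2]; ring
      rw [e, ih]; ring
  have hB : ∀ a c : ℕ, v a * u (a+c) - u a * v (a+c) = 2 * q ^ a * u c := by
    intro a c
    induction c using Nat.twoStepInduction with
    | zero => simp [hu0]; ring
    | one => simpa [hu1] using hA a
    | more n ih1 ih2 =>
      have h1 := hurec (a+n); have h2 := hvrec (a+n); have h3 := hurec n
      have e2 : a + (n+2) = (a+n) + 2 := by omega
      have e1 : a + (n+1) = (a+n) + 1 := by omega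
      rw [e2, h1, h2]
      have : v a * (p * u (a + n + 1) - q * u (a + n)) -
          u a * (p * v (a + n + 1) - q * v (a + n))
        = p * (v a * u (a+(n+1)) - u a * v (a+(n+1)))
          - q * (v a * u (a+n) - u a * v (a+n)) := by rw [e1]; ring
      rw [this, ih1, ih2, h3]; ring
  set f : ℕ → ℚ := fun i => v (m * i) / u (m * i) with hf
  have key : ∀ i ∈ Finset.Icc 1 N,
      q ^ (m * i) / (u (m * i) * u (m * (i + 2 * k)))
        = (1 / (2 * u (2 * k * m))) * (f i - f (i + 2 * k)) := by
    intro i hi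
    obtain ⟨h1, h2⟩ := hden2 i hi
    have hb := hB (m * i) (2 * k * m)
    have em : m * i + 2 * k * m = m * (i + 2 * k) := by ring
    rw [em] at hb
    have hd : f i - f (i + 2 * k)
        = (2 * q ^ (m * i) * u (2 * k * m)) / (u (m * i) * u (m * (i + 2 * k))) := by
      simp only [hf]
      rw [div_sub_div _ _ h1 h2, hb]
    rw [hd]
    field_simp
  rw [Finset.sum_congr rfl key, ← Finset.mul_sum]
  congr 1
  -- telescoping: ∑_{i=1}^N (f i - f (i+2k)) = ∑_{i=1}^{2k} (f i - f (i+N))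
  have shift : ∀ a b : ℕ, ∑ i ∈ Finset.Icc 1 a, f (i + b)
      = ∑ i ∈ Finset.Icc (b+1) (b+a), f i := by
    intro a b
    rw [show Finset.Icc (b+1) (b+a) = (Finset.Icc 1 a).map (addLeftEmbedding b) from
      (Finset.map_add_left_Icc 1 a b).symm, Finset.sum_map]
    exact Finset.sum_congr rfl fun i _ => by
      simp only [addLeftEmbedding_apply]; rw [Nat.add_comm]
  have glue : ∀ a b : ℕ, ∑ i ∈ Finset.Icc 1 a, f i + ∑ i ∈ Finset.Icc (a+1) (a+b), f i
      = ∑ i ∈ Finset.Icc 1 (a+b), f i := by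
    intro a b
    have icc : ∀ x : ℕ, Finset.Icc 1 x = Finset.Ioc 0 x := fun x => Finset.Icc_add_one_left_eq_Ioc 0 x
    rw [icc, icc, Finset.Icc_add_one_left_eq_Ioc]
    exact Finset.sum_Ioc_consecutive f (Nat.zero_le a) (Nat.le_add_right a b)
  rw [Finset.sum_sub_distrib, Finset.sum_sub_distrib, shift, shift]
  have g1 := glue N (2*k)
  have g2 := glue (2*k) N
  rw [Nat.add_comm (2*k) N] at g2
  simp only [hf] at g1 g2 ⊢
  rw [show 2*k+N = N+2*k from by omega]
  linarith
end

section
/- Let (u_k) and (v_k) be the Lucas sequences of the first and second kind for parameters p, q (rational, q ≠ 0). Then for all positive integers m, k, N, assuming the denominators v_{m(i-k)}, v_{m(i+k)} for 1 ≤ i ≤ N, v_{m(i+N-k)}, v_{m(i-k)} for 1 ≤ i ≤ 2k, and u_{2km} are nonzero, the sum over i from 1 to N of q^{m(i-k)} / (v_{m(i-k)} * v_{m(i+k)}) equals (1/(2 * u_{2km})) * the sum over i from 1 to 2k of (u_{m(i+N-k)}/v_{m(i+N-k)} - u_{m(i-k)}/v_{m(i-k)}). -/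
section Aux

variable {p q : ℚ}

lemma lucas_ext (hq : q ≠ 0) (f g : ℤ → ℚ)
    (hf : ∀ j : ℤ, f (j + 2) = p * f (j + 1) - q * f j)
    (hg : ∀ j : ℤ, g (j + 2) = p * g (j + 1) - q * g j)
    (h0 : f 0 = g 0) (h1 : f 1 = g 1) : ∀ n : ℤ, f n = g n := by
  have key : ∀ n : ℤ, f n = g n ∧ f (n + 1) = g (n + 1) := by
    intro n
    induction n using Int.induction_on with
    | zero => exact ⟨h0, h1⟩
    | succ n ih =>
      refine ⟨ih.2, ?_⟩
      have e : ((n : ℤ) + 1) + 1 = (n : ℤ) + 2 := by ring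
      rw [e, hf n, hg n, ih.1, ih.2]
    | pred n ih =>
      constructor
      · have hfn := hf (-(n : ℤ) - 1); have hgn := hg (-(n : ℤ) - 1)
        have e1 : (-(n : ℤ) - 1) + 2 = -(n : ℤ) + 1 := by ring
        have e2 : (-(n : ℤ) - 1) + 1 = -(n : ℤ) := by ring
        rw [e1, e2] at hfn hgn
        rw [ih.1, ih.2] at hfn
        have hqq : q * f (-(n : ℤ) - 1) = q * g (-(n : ℤ) - 1) := by linarith
        exact mul_left_cancel₀ hq hqq
      · have e : (-(n:ℤ) - 1) + 1 = -(n:ℤ) := by ring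
        rw [e]; exact ih.1
  exact fun n => (key n).1

variable {u v : ℤ → ℚ}

lemma lucas_shift_rec (f : ℤ → ℚ) (hf : ∀ j : ℤ, f (j + 2) = p * f (j + 1) - q * f j)
    (a : ℤ) : ∀ j : ℤ, f (a + (j + 2)) = p * f (a + (j + 1)) - q * f (a + j) := by
  intro j
  have h := hf (a + j)
  have e1 : a + j + 2 = a + (j + 2) := by ring
  have e2 : a + j + 1 = a + (j + 1) := by ring
  rw [e1, e2] at h
  exact h

lemma lucas_v_eq (hq : q ≠ 0)
    (hu0 : u 0 = 0) (hu1 : u 1 = 1) (hv0 : v 0 = 2) (hv1 : v 1 = p)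
    (hurec : ∀ j : ℤ, u (j + 2) = p * u (j + 1) - q * u j)
    (hvrec : ∀ j : ℤ, v (j + 2) = p * v (j + 1) - q * v j) :
    ∀ a : ℤ, v a = 2 * u (a + 1) - p * u a := by
  have h2 : u 2 = p := by
    have := hurec 0
    norm_num [hu0, hu1] at this
    exact this
  have hg : ∀ j : ℤ, 2 * u (j + 2 + 1) - p * u (j + 2)
      = p * (2 * u (j + 1 + 1) - p * u (j + 1)) - q * (2 * u (j + 1) - p * u j) := by
    intro j
    rw [show (j : ℤ) + 2 + 1 = (j + 1) + 2 from by ring, hurec (j + 1),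
      show (j : ℤ) + 1 + 1 = j + 2 from by ring, hurec j]
    ring
  have hb0 : v 0 = 2 * u (0 + 1) - p * u 0 := by norm_num [hv0, hu1, hu0]
  have hb1 : v 1 = 2 * u (1 + 1) - p * u 1 := by norm_num [hv1, h2, hu1]; ring
  exact lucas_ext hq v (fun a => 2 * u (a + 1) - p * u a) hvrec hg hb0 hb1

lemma lucas_v_succ (hq : q ≠ 0)
    (hu0 : u 0 = 0) (hu1 : u 1 = 1) (hv0 : v 0 = 2) (hv1 : v 1 = p)
    (hurec : ∀ j : ℤ, u (j + 2) = p * u (j + 1) - q * u j)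
    (hvrec : ∀ j : ℤ, v (j + 2) = p * v (j + 1) - q * v j) :
    ∀ a : ℤ, 2 * v (a + 1) = p * v a + (p ^ 2 - 4 * q) * u a := by
  have h2 : v 2 = p ^ 2 - 2 * q := by
    have := hvrec 0
    norm_num [hv0, hv1] at this
    rw [this]; ring
  have hf : ∀ j : ℤ, v (j + 2 + 1) = p * v (j + 1 + 1) - q * v (j + 1) := by
    intro j
    rw [show (j : ℤ) + 2 + 1 = (j + 1) + 2 from by ring, hvrec (j + 1)]
  have hg : ∀ j : ℤ, (p * v (j + 2) + (p ^ 2 - 4 * q) * u (j + 2)) / 2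
      = p * ((p * v (j + 1) + (p ^ 2 - 4 * q) * u (j + 1)) / 2)
        - q * ((p * v j + (p ^ 2 - 4 * q) * u j) / 2) := by
    intro j
    rw [hvrec j, hurec j]; ring
  have hb0 : v (0 + 1) = (p * v 0 + (p ^ 2 - 4 * q) * u 0) / 2 := by
    norm_num [hv0, hv1, hu0]
  have hb1 : v (1 + 1) = (p * v 1 + (p ^ 2 - 4 * q) * u 1) / 2 := by
    norm_num [hv1, hu1, h2]
    ring
  have key := lucas_ext hq (fun a => v (a + 1))
    (fun a => (p * v a + (p ^ 2 - 4 * q) * u a) / 2) hf hg hb0 hb1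
  intro a
  have := key a
  rw [this]; ring

lemma lucas_add_u (hq : q ≠ 0)
    (hu0 : u 0 = 0) (hu1 : u 1 = 1) (hv0 : v 0 = 2) (hv1 : v 1 = p)
    (hurec : ∀ j : ℤ, u (j + 2) = p * u (j + 1) - q * u j)
    (hvrec : ∀ j : ℤ, v (j + 2) = p * v (j + 1) - q * v j) :
    ∀ a b : ℤ, 2 * u (a + b) = u a * v b + u b * v a := by
  intro a
  have hf : ∀ j : ℤ, u (a + (j + 2)) = p * u (a + (j + 1)) - q * u (a + j) :=
    lucas_shift_rec u hurec a
  have hg : ∀ j : ℤ, (u a * v (j + 2) + u (j + 2) * v a) / 2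
      = p * ((u a * v (j + 1) + u (j + 1) * v a) / 2)
        - q * ((u a * v j + u j * v a) / 2) := by
    intro j
    rw [hvrec j, hurec j]; ring
  have hb0 : u (a + 0) = (u a * v 0 + u 0 * v a) / 2 := by
    norm_num [hv0, hu0]
  have hb1 : u (a + 1) = (u a * v 1 + u 1 * v a) / 2 := by
    have := lucas_v_eq hq hu0 hu1 hv0 hv1 hurec hvrec a
    rw [hv1, hu1]
    rw [this]; ring
  have key := lucas_ext hq (fun b => u (a + b))
    (fun b => (u a * v b + u b * v a) / 2) hf hg hb0 hb1
  intro b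
  have := key b
  rw [this]; ring

lemma lucas_add_v (hq : q ≠ 0)
    (hu0 : u 0 = 0) (hu1 : u 1 = 1) (hv0 : v 0 = 2) (hv1 : v 1 = p)
    (hurec : ∀ j : ℤ, u (j + 2) = p * u (j + 1) - q * u j)
    (hvrec : ∀ j : ℤ, v (j + 2) = p * v (j + 1) - q * v j) :
    ∀ a b : ℤ, 2 * v (a + b) = v a * v b + (p ^ 2 - 4 * q) * u a * u b := by
  intro a
  have hf : ∀ j : ℤ, v (a + (j + 2)) = p * v (a + (j + 1)) - q * v (a + j) :=
    lucas_shift_rec v hvrec a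
  have hg : ∀ j : ℤ, (v a * v (j + 2) + (p ^ 2 - 4 * q) * u a * u (j + 2)) / 2
      = p * ((v a * v (j + 1) + (p ^ 2 - 4 * q) * u a * u (j + 1)) / 2)
        - q * ((v a * v j + (p ^ 2 - 4 * q) * u a * u j) / 2) := by
    intro j
    rw [hvrec j, hurec j]; ring
  have hb0 : v (a + 0) = (v a * v 0 + (p ^ 2 - 4 * q) * u a * u 0) / 2 := by
    norm_num [hv0, hu0]
  have hb1 : v (a + 1) = (v a * v 1 + (p ^ 2 - 4 * q) * u a * u 1) / 2 := by
    have := lucas_v_succ hq hu0 hu1 hv0 hv1 hurec hvrec a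
    rw [hv1, hu1]
    linarith
  have key := lucas_ext hq (fun b => v (a + b))
    (fun b => (v a * v b + (p ^ 2 - 4 * q) * u a * u b) / 2) hf hg hb0 hb1
  intro b
  have := key b
  rw [this]; ring

lemma lucas_norm (hq : q ≠ 0)
    (hu0 : u 0 = 0) (hu1 : u 1 = 1) (hv0 : v 0 = 2) (hv1 : v 1 = p)
    (hurec : ∀ j : ℤ, u (j + 2) = p * u (j + 1) - q * u j)
    (hvrec : ∀ j : ℤ, v (j + 2) = p * v (j + 1) - q * v j) :
    ∀ a : ℤ, v a ^ 2 - (p ^ 2 - 4 * q) * u a ^ 2 = 4 * q ^ a := by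
  have step : ∀ a : ℤ, v (a + 1) ^ 2 - (p ^ 2 - 4 * q) * u (a + 1) ^ 2
      = q * (v a ^ 2 - (p ^ 2 - 4 * q) * u a ^ 2) := by
    intro a
    have h1 : u (a + 1) = (p * u a + v a) / 2 := by
      have := lucas_v_eq hq hu0 hu1 hv0 hv1 hurec hvrec a
      field_simp
      linarith
    have h2 : v (a + 1) = (p * v a + (p ^ 2 - 4 * q) * u a) / 2 := by
      have := lucas_v_succ hq hu0 hu1 hv0 hv1 hurec hvrec a
      field_simp
      linarith
    rw [h1, h2]; ring
  intro a
  induction a using Int.induction_on with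
  | zero => norm_num [hu0, hv0]
  | succ n ih =>
    rw [step n, ih, zpow_add_one₀ hq]; ring
  | pred n ih =>
    have h := step (-(n : ℤ) - 1)
    rw [show (-(n : ℤ) - 1) + 1 = -(n : ℤ) from by ring, ih] at h
    have h2 : q * (v (-(n:ℤ) - 1) ^ 2 - (p ^ 2 - 4 * q) * u (-(n:ℤ) - 1) ^ 2)
        = q * (4 * q ^ (-(n:ℤ) - 1)) := by
      rw [← h]
      rw [show (4 : ℚ) * q ^ (-(n:ℤ)) = 4 * (q ^ ((-(n:ℤ) - 1) + 1)) from by norm_num,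
        zpow_add_one₀ hq]
      ring
    exact mul_left_cancel₀ hq h2

lemma lucas_cross (hq : q ≠ 0)
    (hu0 : u 0 = 0) (hu1 : u 1 = 1) (hv0 : v 0 = 2) (hv1 : v 1 = p)
    (hurec : ∀ j : ℤ, u (j + 2) = p * u (j + 1) - q * u j)
    (hvrec : ∀ j : ℤ, v (j + 2) = p * v (j + 1) - q * v j) :
    ∀ a c : ℤ, u (a + c) * v a - u a * v (a + c) = 2 * q ^ a * u c := by
  intro a c
  have h3 := lucas_add_u hq hu0 hu1 hv0 hv1 hurec hvrec a c
  have h4 := lucas_add_v hq hu0 hu1 hv0 hv1 hurec hvrec a c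
  have h5 := lucas_norm hq hu0 hu1 hv0 hv1 hurec hvrec a
  linear_combination (v a / 2) * h3 - (u a / 2) * h4 + (u c / 2) * h5

lemma tele (F : ℤ → ℚ) (k N : ℤ) (hk : 0 < k) (hN : 0 < N) :
    ∑ i ∈ Finset.Icc (1 : ℤ) N, (F (i + k) - F (i - k))
      = ∑ i ∈ Finset.Icc (1 : ℤ) (2 * k), (F (i + N - k) - F (i - k)) := by
  have shift : ∀ a b t : ℤ, ∑ i ∈ Finset.Icc a b, F (i + t)
      = ∑ j ∈ Finset.Icc (a + t) (b + t), F j := by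
    intro a b t
    rw [← Finset.map_add_right_Icc a b t, Finset.sum_map]
    rfl
  have icc : ∀ a b : ℤ, Finset.Icc a b = Finset.Ioc (a - 1) b := by
    intro a b
    ext x
    simp only [Finset.mem_Icc, Finset.mem_Ioc]
    omega
  rw [Finset.sum_sub_distrib, Finset.sum_sub_distrib]
  have e1 : ∑ i ∈ Finset.Icc (1 : ℤ) N, F (i + k) = ∑ j ∈ Finset.Ioc k (N + k), F j := by
    rw [shift 1 N k, icc]
    congr 1
    congr 1
    ring
  have e2 : ∑ i ∈ Finset.Icc (1 : ℤ) N, F (i - k) = ∑ j ∈ Finset.Ioc (-k) (N - k), F j := by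
    rw [Finset.sum_congr rfl (fun i _ => by rw [sub_eq_add_neg] : ∀ i ∈ Finset.Icc (1:ℤ) N,
      F (i - k) = F (i + -k)), shift 1 N (-k), icc]
    congr 1
    congr 1 <;> ring
  have e3 : ∑ i ∈ Finset.Icc (1 : ℤ) (2 * k), F (i + N - k)
      = ∑ j ∈ Finset.Ioc (N - k) (N + k), F j := by
    rw [Finset.sum_congr rfl (fun i _ => by rw [show i + N - k = i + (N - k) from by ring] :
      ∀ i ∈ Finset.Icc (1:ℤ) (2 * k), F (i + N - k) = F (i + (N - k))),
      shift 1 (2 * k) (N - k), icc]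
    congr 1
    congr 1 <;> ring
  have e4 : ∑ i ∈ Finset.Icc (1 : ℤ) (2 * k), F (i - k) = ∑ j ∈ Finset.Ioc (-k) k, F j := by
    rw [Finset.sum_congr rfl (fun i _ => by rw [sub_eq_add_neg] : ∀ i ∈ Finset.Icc (1:ℤ) (2*k),
      F (i - k) = F (i + -k)), shift 1 (2 * k) (-k), icc]
    congr 1
    congr 1 <;> ring
  rw [e1, e2, e3, e4]
  have c1 : (∑ j ∈ Finset.Ioc (-k) k, F j) + ∑ j ∈ Finset.Ioc k (N + k), F j
      = ∑ j ∈ Finset.Ioc (-k) (N + k), F j := by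
    rw [← Finset.sum_union (Finset.disjoint_left.mpr (fun x hx hx' => by
        simp only [Finset.mem_Ioc] at hx hx'; omega)),
      Finset.Ioc_union_Ioc_eq_Ioc (by omega) (by omega)]
  have c2 : (∑ j ∈ Finset.Ioc (-k) (N - k), F j) + ∑ j ∈ Finset.Ioc (N - k) (N + k), F j
      = ∑ j ∈ Finset.Ioc (-k) (N + k), F j := by
    rw [← Finset.sum_union (Finset.disjoint_left.mpr (fun x hx hx' => by
        simp only [Finset.mem_Ioc] at hx hx'; omega)),
      Finset.Ioc_union_Ioc_eq_Ioc (by omega) (by omega)]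
  linarith

end Aux

theorem stmt_19 (p q : ℚ) (hq : q ≠ 0)
    (u v : ℤ → ℚ)
    (hu0 : u 0 = 0) (hu1 : u 1 = 1) (hv0 : v 0 = 2) (hv1 : v 1 = p)
    (hurec : ∀ k : ℤ, u (k + 2) = p * u (k + 1) - q * u k)
    (hvrec : ∀ k : ℤ, v (k + 2) = p * v (k + 1) - q * v k)
    (m k N : ℤ) (hm : 0 < m) (hk : 0 < k) (hN : 0 < N)
    (hden1 : ∀ i ∈ Finset.Icc (1 : ℤ) N, v (m * (i - k)) ≠ 0 ∧ v (m * (i + k)) ≠ 0)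
    (hden2 : ∀ i ∈ Finset.Icc (1 : ℤ) (2 * k),
        v (m * (i + N - k)) ≠ 0 ∧ v (m * (i - k)) ≠ 0)
    (hden3 : u (2 * k * m) ≠ 0) :
    ∑ i ∈ Finset.Icc (1 : ℤ) N, q ^ (m * (i - k)) / (v (m * (i - k)) * v (m * (i + k)))
      = (1 / (2 * u (2 * k * m))) *
          ∑ i ∈ Finset.Icc (1 : ℤ) (2 * k),
            (u (m * (i + N - k)) / v (m * (i + N - k)) - u (m * (i - k)) / v (m * (i - k))) := by
  have term : ∀ i ∈ Finset.Icc (1 : ℤ) N,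
      q ^ (m * (i - k)) / (v (m * (i - k)) * v (m * (i + k)))
        = (1 / (2 * u (2 * k * m))) *
            (u (m * (i + k)) / v (m * (i + k)) - u (m * (i - k)) / v (m * (i - k))) := by
    intro i hi
    obtain ⟨ha, hb⟩ := hden1 i hi
    have hx := lucas_cross hq hu0 hu1 hv0 hv1 hurec hvrec (m * (i - k)) (2 * k * m)
    rw [show m * (i - k) + 2 * k * m = m * (i + k) from by ring] at hx
    rw [div_sub_div _ _ hb ha, div_mul_eq_div_div, one_div, inv_mul_eq_div, div_div]
    rw [show u (m * (i + k)) * v (m * (i - k)) - v (m * (i + k)) * u (m * (i - k))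
        = 2 * q ^ (m * (i - k)) * u (2 * k * m) from by linarith]
    field_simp
  rw [Finset.sum_congr rfl term, ← Finset.mul_sum]
  congr 1
  exact tele (fun j => u (m * j) / v (m * j)) k N hk hN
end
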